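/- Let $\alpha, \beta_1, \ldots, \beta_m \in \mathbb{Z}^n$ and let $\Delta$ be the convex hull of $\{\beta_1, \ldots, \beta_m\}$ in $\mathbb{R}^n$. Then the function $z \mapsto |z^{\alpha}|^2 \left(\sum_{i=1}^m |z^{\beta_i}|^2\right)^{-1}$ is bounded on $(\mathbb{C}^*)^n$ if and only if $\alpha \in \Delta$. -/

import Mathlib

open Finset

lemma stmt9_abs_prod {n : ℕ} (γ : Fin n → ℤ) (z : Fin n → ℂ) (hz : ∀ i, z i ≠ 0) :
    ‖∏ i, z i ^ γ i‖ ^ 2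
      = Real.exp (∑ i, (γ i : ℝ) * (2 * Real.log (‖z i‖))) := by
  have h1 : ‖∏ i, z i ^ γ i‖ = ∏ i, ‖z i‖ ^ γ i := by
    rw [norm_prod]; simp
  have h2 : ∀ i : Fin n, ‖z i‖ ^ γ i
      = Real.exp ((γ i : ℝ) * Real.log (‖z i‖)) := by
    intro i
    have hpos : 0 < ‖z i‖ := norm_pos_iff.mpr (hz i)
    rw [← Real.rpow_intCast, Real.rpow_def_of_pos hpos, mul_comm]
  rw [h1]
  simp only [h2, ← Real.exp_sum, ← Real.exp_nat_mul]
  congr 1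
  rw [Finset.mul_sum]
  congr 1; ext i; push_cast; ring

theorem stmt9 {n m : ℕ} (hm : 0 < m) (α : Fin n → ℤ) (β : Fin m → Fin n → ℤ) :
    (∃ C : ℝ, ∀ z : Fin n → ℂ, (∀ i, z i ≠ 0) →
        ‖∏ i, z i ^ α i‖ ^ 2 / (∑ j, ‖∏ i, z i ^ β j i‖ ^ 2) ≤ C)
      ↔ (fun i => (α i : ℝ)) ∈
          convexHull ℝ (Set.range fun j => fun i => (β j i : ℝ)) := by
  constructor
  · -- bounded → α ∈ conv
    rintro ⟨C, hC⟩
    by_contra hα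
    -- separating functional
    obtain ⟨f, u, hfu, huα⟩ := geometric_hahn_banach_closed_point
      (convex_convexHull ℝ _)
      (((Set.finite_range _).isCompact_convexHull (𝕜 := ℝ)).isClosed) hα
    set w : Fin n → ℝ := fun i => f (fun j => if i = j then 1 else 0) with hw
    have hfeval : ∀ v : Fin n → ℝ, f v = ∑ i, v i * w i := fun v =>
      (f : (Fin n → ℝ) →ₗ[ℝ] ℝ).pi_apply_eq_sum_univ v
    set a : ℝ := f (fun i => (α i : ℝ)) with ha
    have hεpos : 0 < a - u := sub_pos.mpr huα
    set t : ℝ := Real.log (m * (|C| + 1)) / (2 * (a - u)) with ht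
    have hmR : (1:ℝ) ≤ m * (|C| + 1) := by
      have h1 : (1:ℝ) ≤ m := by exact_mod_cast hm
      nlinarith [abs_nonneg C]
    have htnn : 0 ≤ t := by
      apply div_nonneg
      · exact Real.log_nonneg hmR
      · positivity
    set z : Fin n → ℂ := fun i => ((Real.exp (t * w i) : ℝ) : ℂ) with hzdef
    have hz : ∀ i, z i ≠ 0 := by
      intro i
      simp [hzdef, Complex.ofReal_ne_zero, Real.exp_ne_zero]
    have hlog : ∀ i, Real.log (‖z i‖) = t * w i := by
      intro i
      simp only [hzdef, Complex.norm_real, Real.norm_eq_abs, Real.abs_exp, Real.log_exp]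
    have key : ∀ γ : Fin n → ℤ, ‖∏ i, z i ^ γ i‖ ^ 2
        = Real.exp (2 * t * f (fun i => (γ i : ℝ))) := by
      intro γ
      rw [stmt9_abs_prod γ z hz, hfeval]
      congr 1
      simp only [hlog, Finset.mul_sum]
      congr 1; ext i; ring
    have hCz := hC z hz
    -- denominator bound
    have hden_le : (∑ j, ‖∏ i, z i ^ β j i‖ ^ 2) ≤ m * Real.exp (2 * t * u) := by
      calc (∑ j, ‖∏ i, z i ^ β j i‖ ^ 2)
          = ∑ j : Fin m, Real.exp (2 * t * f (fun i => (β j i : ℝ))) := by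
            simp only [key]
        _ ≤ ∑ _j : Fin m, Real.exp (2 * t * u) := by
            apply Finset.sum_le_sum
            intro j _
            apply Real.exp_le_exp.mpr
            have hb : f (fun i => (β j i : ℝ)) ≤ u :=
              (hfu _ (subset_convexHull ℝ _ ⟨j, rfl⟩)).le
            nlinarith
        _ = m * Real.exp (2 * t * u) := by simp [mul_comm]
    have hden_pos : 0 < (∑ j, ‖∏ i, z i ^ β j i‖ ^ 2) := by
      apply Finset.sum_pos
      · intro j _
        have : ‖∏ i, z i ^ β j i‖ ≠ 0 := by
          rw [norm_ne_zero_iff]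
          exact Finset.prod_ne_zero_iff.mpr fun i _ => zpow_ne_zero _ (hz i)
        positivity
      · exact Finset.univ_nonempty_iff.mpr ⟨⟨0, hm⟩⟩
    have hnum : ‖∏ i, z i ^ α i‖ ^ 2 = Real.exp (2 * t * a) := key α
    have hlb : |C| + 1 ≤ ‖∏ i, z i ^ α i‖ ^ 2
        / (∑ j, ‖∏ i, z i ^ β j i‖ ^ 2) := by
      have h1 : Real.exp (2 * t * a) / (m * Real.exp (2 * t * u))
          ≤ Real.exp (2 * t * a) / (∑ j, ‖∏ i, z i ^ β j i‖ ^ 2) := by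
        apply div_le_div_of_nonneg_left (Real.exp_pos _).le hden_pos hden_le
      have hexp : 2 * t * a - 2 * t * u = Real.log (↑m * (|C| + 1)) := by
        have h3 : 2 * t * a - 2 * t * u = t * (2 * (a - u)) := by ring
        rw [h3, ht, div_mul_cancel₀]
        positivity
      have hsplit : Real.exp (2 * t * a) = Real.exp (2 * t * u) * (↑m * (|C| + 1)) := by
        rw [show 2 * t * a = 2 * t * u + (2 * t * a - 2 * t * u) by ring, Real.exp_add, hexp,
          Real.exp_log (by positivity)]
      have hm0 : (m : ℝ) ≠ 0 := by positivity
      have he0 : Real.exp (2 * t * u) ≠ 0 := (Real.exp_pos _).ne'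
      have h2 : Real.exp (2 * t * a) / (↑m * Real.exp (2 * t * u)) = |C| + 1 := by
        rw [hsplit]; field_simp
      rw [hnum, ← h2]
      exact h1
    have : |C| + 1 ≤ C := hlb.trans hCz
    have := le_abs_self C
    linarith
  · -- α ∈ conv → bounded
    intro hα
    refine ⟨1, fun z hz => ?_⟩
    rw [_root_.convexHull_eq] at hα
    obtain ⟨ι, s, wt, p, hw0, hw1, hps, hcm⟩ := hα
    have hden_pos : 0 < (∑ j, ‖∏ i, z i ^ β j i‖ ^ 2) := by
      apply Finset.sum_pos
      · intro j _
        have : ‖∏ i, z i ^ β j i‖ ≠ 0 := by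
          rw [norm_ne_zero_iff]
          exact Finset.prod_ne_zero_iff.mpr fun i _ => zpow_ne_zero _ (hz i)
        positivity
      · exact Finset.univ_nonempty_iff.mpr ⟨⟨0, hm⟩⟩
    rw [div_le_one hden_pos]
    set Y : Fin n → ℝ := fun i => 2 * Real.log (‖z i‖) with hY
    have hsum : (fun i => (α i : ℝ)) = ∑ k ∈ s, wt k • p k := by
      rw [← hcm, Finset.centerMass, hw1, inv_one, one_smul]
    -- numerator = exp (⟨α, Y⟩)
    rw [stmt9_abs_prod α z hz]
    set S := ∑ j, ‖∏ i, z i ^ β j i‖ ^ 2 with hS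
    have hterm : ∀ k ∈ s, Real.exp (∑ i, p k i * Y i) ≤ S := by
      intro k hk
      obtain ⟨j, hj⟩ := hps k hk
      have : Real.exp (∑ i, p k i * Y i) = ‖∏ i, z i ^ β j i‖ ^ 2 := by
        rw [stmt9_abs_prod (β j) z hz, ← hj]
      rw [this, hS]
      apply Finset.single_le_sum (fun j _ => by positivity) (Finset.mem_univ j)
    have hlin : (∑ i, (α i : ℝ) * Y i) = ∑ k ∈ s, wt k • (∑ i, p k i * Y i) := by
      have : ∀ i, (α i : ℝ) = ∑ k ∈ s, wt k * p k i := by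
        intro i
        have := congrFun hsum i
        simpa using this
      simp only [this, smul_eq_mul, Finset.sum_mul, Finset.mul_sum]
      rw [Finset.sum_comm]
      congr 1; ext k; congr 1; ext i; ring
    calc Real.exp (∑ i, (α i : ℝ) * Y i)
        = Real.exp (∑ k ∈ s, wt k • (∑ i, p k i * Y i)) := by rw [hlin]
      _ ≤ ∑ k ∈ s, wt k • Real.exp (∑ i, p k i * Y i) := by
          have := convexOn_exp.map_sum_le (p := fun k => ∑ i, p k i * Y i) hw0 hw1
            (fun k _ => Set.mem_univ _)
          simpa using this
      _ ≤ ∑ k ∈ s, wt k • S := by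
          apply Finset.sum_le_sum
          intro k hk
          exact smul_le_smul_of_nonneg_left (hterm k hk) (hw0 k hk)
      _ = S := by rw [← Finset.sum_smul, hw1, one_smul]
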